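/- In the many-to-one stable matching market with base-station quota Q and strict preferences on both sides, every stable matching matches the same number of proposers (rural hospitals-style consequence): in particular, if some stable matching leaves a source unmatched, then every stable matching leaves that same source unmatched. -/

import Mathlib

/-- Acceptors of the relay-selection market: `Nr` relays plus one base station. -/
abbrev Acceptor (Nr : ℕ) := Fin Nr ⊕ Unit

/-- Quotas: each relay has quota 1, the base station has quota `Q`. -/
def quota (Nr Q : ℕ) : Acceptor Nr → ℕ := Sum.elim (fun _ => 1) (fun _ => Q)

/-- `ν` is a many-to-one matching of sources to acceptors: quotas respected, each
source matched to at most one acceptor, and only to acceptable acceptors. -/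
def IsMatchingQ {Ns Nr : ℕ} (prefP : Fin Ns → List (Acceptor Nr)) (q : Acceptor Nr → ℕ)
    (ν : Acceptor Nr → Finset (Fin Ns)) : Prop :=
  (∀ a, (ν a).card ≤ q a) ∧
  (∀ p a a', p ∈ ν a → p ∈ ν a' → a = a') ∧
  (∀ a p, p ∈ ν a → a ∈ prefP p)

/-- Stability: no blocking pair `(p, a)` where `a` is acceptable to `p`, not matched
to `p`, `p` prefers `a` to its current match (or is unmatched), and `a` has a free
slot or prefers `p` to one of its currently matched sources. -/
def IsStable {Ns Nr : ℕ} (prefP : Fin Ns → List (Acceptor Nr)) (q : Acceptor Nr → ℕ)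
    (prefA : Acceptor Nr → Fin Ns → ℕ) (ν : Acceptor Nr → Finset (Fin Ns)) : Prop :=
  IsMatchingQ prefP q ν ∧
  ¬ ∃ (p : Fin Ns) (a : Acceptor Nr),
      a ∈ prefP p ∧ p ∉ ν a ∧
      (∀ a', p ∈ ν a' → (prefP p).idxOf a < (prefP p).idxOf a') ∧
      ((ν a).card < q a ∨ ∃ p' ∈ ν a, prefA a p < prefA a p')


/-- The derived `BEq` on `Acceptor Nr` is lawful. -/
instance acceptorLawfulBEq {n : ℕ} : LawfulBEq (Fin n ⊕ Unit) where
  eq_of_beq {a b} h := by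
    cases a <;> cases b
    · exact congrArg Sum.inl (eq_of_beq h)
    · exact Bool.noConfusion h
    · exact Bool.noConfusion h
    · exact congrArg Sum.inr (Subsingleton.elim _ _)
  rfl {a} := by
    cases a with
    | inl x => exact beq_self_eq_true x
    | inr x => rfl

theorem my_indexOf_inj {α : Type*} [BEq α] [LawfulBEq α] :
    ∀ (l : List α) (x y : α), x ∈ l → y ∈ l → l.idxOf x = l.idxOf y → x = y := by
  intro l
  induction l with
  | nil => intro x y hx _ _; exact absurd hx List.not_mem_nil
  | cons a l ih =>
    intro x y hx hy h
    rw [List.idxOf_cons, List.idxOf_cons] at h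
    by_cases h1 : a = x <;> by_cases h2 : a = y
    · exact h1 ▸ h2
    · rw [(beq_iff_eq).2 h1, beq_eq_false_iff_ne.2 h2, cond_true, cond_false] at h
      exact absurd h (by omega)
    · rw [(beq_iff_eq).2 h2, beq_eq_false_iff_ne.2 h1, cond_true, cond_false] at h
      exact absurd h (by omega)
    · rw [beq_eq_false_iff_ne.2 h1, beq_eq_false_iff_ne.2 h2, cond_false, cond_false] at h
      have hx' : x ∈ l := by
        rcases List.mem_cons.1 hx with rfl | hx'
        · exact absurd rfl h1
        · exact hx'
      have hy' : y ∈ l := by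
        rcases List.mem_cons.1 hy with rfl | hy'
        · exact absurd rfl h2
        · exact hy'
      exact ih x y hx' hy' (by omega)

/-- The invariant carried along the augmenting walk through the symmetric
difference of two stable matchings `μ` and `ν`. `W` is the set of sources
visited so far, `(p, a)` is the current pair with `p ∈ ν a \ μ a`. -/
def RHInv {Ns Nr : ℕ} (prefA : Acceptor Nr → Fin Ns → ℕ) (q : Acceptor Nr → ℕ)
    (μ ν : Acceptor Nr → Finset (Fin Ns))
    (W : Finset (Fin Ns)) (p : Fin Ns) (a : Acceptor Nr) : Prop :=
  p ∈ W ∧ p ∈ ν a ∧ p ∉ μ a ∧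
  (∀ p' ∈ μ a, prefA a p' < prefA a p) ∧
  q a ≤ (μ a).card ∧
  (∀ b, ((μ b \ ν b) ∩ W).card + (if b = a then 1 else 0) ≤ ((ν b \ μ b) ∩ W).card)

lemma rh_step {Ns Nr : ℕ} {prefP : Fin Ns → List (Acceptor Nr)} {q : Acceptor Nr → ℕ}
    {prefA : Acceptor Nr → Fin Ns → ℕ}
    (hP : ∀ p, (prefP p).Nodup) (hA : ∀ a, Function.Injective (prefA a))
    {μ ν : Acceptor Nr → Finset (Fin Ns)}
    (hμ : IsStable prefP q prefA μ) (hν : IsStable prefP q prefA ν)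
    {W : Finset (Fin Ns)} {p : Fin Ns} {a : Acceptor Nr}
    (h : RHInv prefA q μ ν W p a) :
    ∃ W' p' a', RHInv prefA q μ ν W' p' a' ∧ W'.card = W.card + 1 := by
  obtain ⟨hpW, hpν, hpμ, hpref, hfull, hcount⟩ := h
  -- counting: there is a fresh source p1 ∈ μ a \ ν a, p1 ∉ W
  have hνq : (ν a).card ≤ q a := hν.1.1 a
  have h1 : (μ a \ ν a).card + (μ a ∩ ν a).card = (μ a).card :=
    Finset.card_sdiff_add_card_inter _ _
  have h2 : (ν a \ μ a).card + (ν a ∩ μ a).card = (ν a).card :=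
    Finset.card_sdiff_add_card_inter _ _
  have hic : (μ a ∩ ν a).card = (ν a ∩ μ a).card := by rw [Finset.inter_comm]
  have hsub : ((μ a \ ν a) ∩ W) ⊆ (μ a \ ν a) := Finset.inter_subset_left
  have hsub2 : ((ν a \ μ a) ∩ W).card ≤ (ν a \ μ a).card :=
    Finset.card_le_card Finset.inter_subset_left
  have hca := hcount a
  rw [if_pos rfl] at hca
  have hlt : ((μ a \ ν a) ∩ W).card < (μ a \ ν a).card := by omega
  have hne : ((μ a \ ν a) \ W).Nonempty := by
    rw [← Finset.card_pos]
    have : ((μ a \ ν a) \ W) = (μ a \ ν a) \ ((μ a \ ν a) ∩ W) := by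
      ext x; simp [and_assoc]
    rw [this, Finset.card_sdiff_of_subset hsub]
    omega
  obtain ⟨p1, hp1⟩ := hne
  rw [Finset.mem_sdiff, Finset.mem_sdiff] at hp1
  obtain ⟨⟨hp1μ, hp1ν⟩, hp1W⟩ := hp1
  have hp1p : p1 ≠ p := fun hh => hpμ (hh ▸ hp1μ)
  have hpref1 : prefA a p1 < prefA a p := hpref p1 hp1μ
  -- p1 is matched in ν to some a1 weakly preferred to a
  have haccA : a ∈ prefP p1 := hμ.1.2.2 a p1 hp1μ
  have h3 : ¬ ∀ a', p1 ∈ ν a' → (prefP p1).idxOf a < (prefP p1).idxOf a' := by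
    intro h3
    exact hν.2 ⟨p1, a, haccA, hp1ν, h3, Or.inr ⟨p, hpν, hpref1⟩⟩
  push_neg at h3
  obtain ⟨a1, hp1a1, hidx⟩ := h3
  have ha1a : a1 ≠ a := fun hh => hp1ν (hh ▸ hp1a1)
  have haccA1 : a1 ∈ prefP p1 := hν.1.2.2 a1 p1 hp1a1
  have hidx' : (prefP p1).idxOf a1 < (prefP p1).idxOf a := by
    rcases lt_or_eq_of_le hidx with hlt' | heq
    · exact hlt'
    · exact absurd (my_indexOf_inj (prefP p1) a1 a haccA1 haccA heq) ha1a
  have hp1μa1 : p1 ∉ μ a1 := fun hh => ha1a (hμ.1.2.1 p1 a1 a hh hp1μ)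
  -- μ-stability at (p1, a1): a1 is full in μ and prefers all of μ a1 to p1
  have h4 : ¬ ((μ a1).card < q a1 ∨ ∃ p' ∈ μ a1, prefA a1 p1 < prefA a1 p') := by
    intro h4
    refine hμ.2 ⟨p1, a1, haccA1, hp1μa1, ?_, h4⟩
    intro a' ha'
    have : a' = a := hμ.1.2.1 p1 a' a ha' hp1μ
    rw [this]; exact hidx'
  push_neg at h4
  obtain ⟨hfull1, hpref1'⟩ := h4
  have hpref1'' : ∀ p' ∈ μ a1, prefA a1 p' < prefA a1 p1 := by
    intro p' hp'
    have hne' : p' ≠ p1 := fun hh => hp1μa1 (hh ▸ hp')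
    exact lt_of_le_of_ne (hpref1' p' hp') (fun hh => hne' (hA a1 hh))
  refine ⟨insert p1 W, p1, a1, ⟨Finset.mem_insert_self _ _, hp1a1, hp1μa1,
    hpref1'', hfull1, ?_⟩, Finset.card_insert_of_notMem hp1W⟩
  -- the counting invariant
  intro b
  have hcb := hcount b
  by_cases hba : b = a
  · subst hba
    have e1 : (μ b \ ν b) ∩ insert p1 W = insert p1 ((μ b \ ν b) ∩ W) := by
      ext x
      simp only [Finset.mem_inter, Finset.mem_insert, Finset.mem_sdiff]
      constructor
      · rintro ⟨hx1, hx2 | hx2⟩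
        · exact Or.inl hx2
        · exact Or.inr ⟨hx1, hx2⟩
      · rintro (rfl | ⟨hx1, hx2⟩)
        · exact ⟨⟨hp1μ, hp1ν⟩, Or.inl rfl⟩
        · exact ⟨hx1, Or.inr hx2⟩
    have e2 : (ν b \ μ b) ∩ insert p1 W = (ν b \ μ b) ∩ W := by
      ext x
      simp only [Finset.mem_inter, Finset.mem_insert, Finset.mem_sdiff]
      constructor
      · rintro ⟨hx1, hx2 | hx2⟩
        · exact absurd hx1.1 (hx2 ▸ hp1ν)
        · exact ⟨hx1, hx2⟩
      · rintro ⟨hx1, hx2⟩; exact ⟨hx1, Or.inr hx2⟩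
    rw [e1, e2, Finset.card_insert_of_notMem (fun hh => hp1W (Finset.mem_inter.1 hh).2)]
    have : (if b = a1 then 1 else 0) = 0 := if_neg (fun hh => ha1a hh.symm)
    rw [if_pos rfl] at hcb
    omega
  · have e1 : (μ b \ ν b) ∩ insert p1 W = (μ b \ ν b) ∩ W := by
      ext x
      simp only [Finset.mem_inter, Finset.mem_insert, Finset.mem_sdiff]
      constructor
      · rintro ⟨hx1, hx2 | hx2⟩
        · exact absurd (hμ.1.2.1 p1 b a (hx2 ▸ hx1.1) hp1μ) hba
        · exact ⟨hx1, hx2⟩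
      · rintro ⟨hx1, hx2⟩; exact ⟨hx1, Or.inr hx2⟩
    rw [e1]
    by_cases hb1 : b = a1
    · subst hb1
      have e2 : (ν b \ μ b) ∩ insert p1 W = insert p1 ((ν b \ μ b) ∩ W) := by
        ext x
        simp only [Finset.mem_inter, Finset.mem_insert, Finset.mem_sdiff]
        constructor
        · rintro ⟨hx1, hx2 | hx2⟩
          · exact Or.inl hx2
          · exact Or.inr ⟨hx1, hx2⟩
        · rintro (rfl | ⟨hx1, hx2⟩)
          · exact ⟨⟨hp1a1, hp1μa1⟩, Or.inl rfl⟩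
          · exact ⟨hx1, Or.inr hx2⟩
      rw [e2, Finset.card_insert_of_notMem (fun hh => hp1W (Finset.mem_inter.1 hh).2)]
      rw [if_pos rfl]
      rw [if_neg hba] at hcb
      omega
    · have e2 : (ν b \ μ b) ∩ insert p1 W = (ν b \ μ b) ∩ W := by
        ext x
        simp only [Finset.mem_inter, Finset.mem_insert, Finset.mem_sdiff]
        constructor
        · rintro ⟨hx1, hx2 | hx2⟩
          · exact absurd (hν.1.2.1 p1 b a1 (hx2 ▸ hx1.1) hp1a1) hb1
          · exact ⟨hx1, hx2⟩
        · rintro ⟨hx1, hx2⟩; exact ⟨hx1, Or.inr hx2⟩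
      rw [e2, if_neg hb1]
      rw [if_neg hba] at hcb
      omega

/-- Key lemma: a source unmatched in the stable matching `μ` is unmatched in the
stable matching `ν` as well. -/
lemma rh_key {Ns Nr : ℕ} {prefP : Fin Ns → List (Acceptor Nr)} {q : Acceptor Nr → ℕ}
    {prefA : Acceptor Nr → Fin Ns → ℕ}
    (hP : ∀ p, (prefP p).Nodup) (hA : ∀ a, Function.Injective (prefA a))
    {μ ν : Acceptor Nr → Finset (Fin Ns)}
    (hμ : IsStable prefP q prefA μ) (hν : IsStable prefP q prefA ν)
    (p : Fin Ns) (hp : ∀ a, p ∉ μ a) : ∀ a, p ∉ ν a := by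
  intro a0 hpν
  -- base state
  have hbase : RHInv prefA q μ ν {p} p a0 := by
    have haccA : a0 ∈ prefP p := hν.1.2.2 a0 p hpν
    have h4 : ¬ ((μ a0).card < q a0 ∨ ∃ p' ∈ μ a0, prefA a0 p < prefA a0 p') := by
      intro h4
      exact hμ.2 ⟨p, a0, haccA, hp a0, fun a' ha' => absurd ha' (hp a'), h4⟩
    push_neg at h4
    obtain ⟨hfull, hpref⟩ := h4
    refine ⟨Finset.mem_singleton_self _, hpν, hp a0, ?_, hfull, ?_⟩
    · intro p' hp'
      have hne' : p' ≠ p := fun hh => (hp a0) (hh ▸ hp')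
      exact lt_of_le_of_ne (hpref p' hp') (fun hh => hne' (hA a0 hh))
    · intro b
      have e1 : (μ b \ ν b) ∩ {p} = ∅ := by
        ext x
        simp only [Finset.mem_inter, Finset.mem_singleton, Finset.mem_sdiff,
          Finset.notMem_empty, iff_false]
        rintro ⟨hx1, rfl⟩
        exact hp b hx1.1
      rw [e1, Finset.card_empty]
      by_cases hb : b = a0
      · subst hb
        have e2 : (ν b \ μ b) ∩ {p} = {p} := by
          ext x
          simp only [Finset.mem_inter, Finset.mem_singleton, Finset.mem_sdiff]
          constructor
          · rintro ⟨_, rfl⟩; rfl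
          · rintro rfl; exact ⟨⟨hpν, hp b⟩, rfl⟩
        rw [e2, if_pos rfl, Finset.card_singleton]
      · rw [if_neg hb]
        exact Nat.zero_le _
  -- iterate the step to get arbitrarily large W
  have hgrow : ∀ n : ℕ, ∃ W p' a', RHInv prefA q μ ν W p' a' ∧ n ≤ W.card := by
    intro n
    induction n with
    | zero => exact ⟨{p}, p, a0, hbase, Nat.zero_le _⟩
    | succ n ih =>
      obtain ⟨W, p', a', hinv, hcard⟩ := ih
      obtain ⟨W', p'', a'', hinv', hcard'⟩ := rh_step hP hA hμ hν hinv
      exact ⟨W', p'', a'', hinv', by omega⟩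
  obtain ⟨W, p', a', _, hcard⟩ := hgrow (Ns + 1)
  have : W.card ≤ Ns := by
    have := Finset.card_le_card (Finset.subset_univ W)
    simpa using this
  omega

/-- rural hospitals-style: in the many-to-one market with base-station
quota `Q`, relay quotas 1 and strict preferences on both sides, every stable matching
matches the same number of sources; in particular, a source unmatched in some stable
matching is unmatched in every stable matching. -/
theorem rural_hospitals_for_relay_market (Ns Nr Q : ℕ)
    (prefP : Fin Ns → List (Acceptor Nr)) (prefA : Acceptor Nr → Fin Ns → ℕ)
    (hP : ∀ p, (prefP p).Nodup) (hA : ∀ a, Function.Injective (prefA a))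
    (hQ : 0 < Q)
    (μ ν : Acceptor Nr → Finset (Fin Ns))
    (hμ : IsStable prefP (quota Nr Q) prefA μ)
    (hν : IsStable prefP (quota Nr Q) prefA ν) :
    (Finset.univ.filter fun p : Fin Ns => ∃ a, p ∈ μ a).card =
      (Finset.univ.filter fun p : Fin Ns => ∃ a, p ∈ ν a).card ∧
    ∀ p : Fin Ns, (∀ a, p ∉ μ a) → ∀ a, p ∉ ν a := by
  have key1 := fun p hp => rh_key hP hA hμ hν p hp
  have key2 := fun p hp => rh_key hP hA hν hμ p hp
  constructor
  · congr 1
    ext p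
    simp only [Finset.mem_filter, Finset.mem_univ, true_and]
    constructor
    · rintro ⟨a, ha⟩
      by_contra h
      push_neg at h
      exact key2 p h a ha
    · rintro ⟨a, ha⟩
      by_contra h
      push_neg at h
      exact key1 p h a ha
  · exact key1
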